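/- Let λ, a ∈ ℝⁿ with ‖λ‖ = ‖a‖ = 1 and d ∈ ℝᵐ with ‖d‖ ≤ 1. The function φ_λ : ℝᵐ → ℝ defined by φ_λ(y) = ‖y‖ if λᵀa‖y‖ + dᵀy ≤ 0 and φ_λ(y) = sqrt((‖y‖² − (dᵀy)²)(1 − (λᵀa)²)) − (dᵀy)(λᵀa) otherwise, is sublinear (convex and positively homogeneous). -/

import Mathlib

open RealInnerProductSpace

lemma aux1 (s c r w A : ℝ) (hr : 0 ≤ r) (hw : 0 ≤ w) (hw2 : w^2 = 1 - c^2)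
    (hA : 0 ≤ A) (hA2 : A^2 = r^2 - s^2) (h : 0 < c*r + s) : 0 ≤ s*w + c*A := by
  rcases le_or_gt 0 c with hc | hc
  · rcases le_or_gt 0 s with hs | hs
    · positivity
    · have hcr : 0 < c*r - s := by nlinarith
      have hX2 : s*w*(s*w) < c*A*(c*A) := by nlinarith [mul_pos hcr h]
      have h1 : 0 ≤ c*A := mul_nonneg hc hA
      have h2 : 0 ≤ (-s)*w := mul_nonneg (by linarith) hw
      nlinarith [hX2, h1, h2]
  · have hs : 0 < s := by nlinarith
    have hcr : 0 < s - c*r := by nlinarith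
    have hX2 : c*A*(c*A) < s*w*(s*w) := by nlinarith [mul_pos hcr h]
    have h1 : 0 ≤ s*w := mul_nonneg hs.le hw
    have h2 : 0 ≤ (-c)*A := mul_nonneg (by linarith) hA
    nlinarith [hX2, h1, h2]

lemma aux3 (r s A : ℝ) (hr : 0 < r) (hA : 0 ≤ A) (hA2 : A^2 = r^2 - s^2) :
    Real.sqrt (1 - (-s/r)^2) * A - (-s/r) * s = r := by
  have he1 : 1 - (-s/r)^2 = (A/r)^2 := by
    field_simp
    linarith
  rw [he1, Real.sqrt_sq (by positivity)]
  field_simp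
  linarith

lemma aux2 (s c u r v w A : ℝ) (hr : 0 ≤ r) (hcu : c ≤ u) (hu1 : u ≤ 1)
    (hv : 0 ≤ v) (hv2 : v^2 = 1-u^2) (hw : 0 ≤ w) (hw2 : w^2 = 1-c^2)
    (hA : 0 ≤ A) (hA2 : A^2 = r^2 - s^2) (h : 0 < c*r + s) :
    v*A - u*s ≤ w*A - c*s := by
  have h2 : 0 < u*r + s := by nlinarith [mul_le_mul_of_nonneg_right hcu hr]
  have c1 := aux1 s c r w A hr hw hw2 hA hA2 h
  have c2 := aux1 s u r v A hr hv hv2 hA hA2 h2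
  have hkey : (w+v)*((w-v)*A + (u-c)*s) = (u-c)*((s*w+c*A)+(s*v+u*A)) := by
    linear_combination A*hw2 - A*hv2
  rcases eq_or_lt_of_le (by positivity : (0:ℝ) ≤ w + v) with hwv | hwv
  · have hw0 : w = 0 := by linarith
    have hv0 : v = 0 := by linarith
    have hc2 : (c-1)*(c+1) = 0 := by nlinarith
    rcases mul_eq_zero.mp hc2 with hc1 | hc1
    · have hcc : c = 1 := by linarith
      have huu : u = 1 := by linarith
      rw [hw0, hv0, hcc, huu]
    · exfalso
      have hcc : c = -1 := by linarith
      have hsr : s ≤ r := by nlinarith [sq_nonneg A]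
      nlinarith
  · have hrhs : 0 ≤ (u-c)*((s*w+c*A)+(s*v+u*A)) :=
      mul_nonneg (by linarith) (by linarith)
    nlinarith [hkey, hrhs, hwv]

set_option maxHeartbeats 1000000 in
theorem phi_sublinear {n m : ℕ}
    (lam a : EuclideanSpace ℝ (Fin n)) (d : EuclideanSpace ℝ (Fin m))
    (hlam : ‖lam‖ = 1) (ha : ‖a‖ = 1) (hd : ‖d‖ ≤ 1)
    (φ : EuclideanSpace ℝ (Fin m) → ℝ)
    (hφ : ∀ y, φ y =
      if ⟪lam, a⟫ * ‖y‖ + ⟪d, y⟫ ≤ 0 then ‖y‖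
      else Real.sqrt ((‖y‖ ^ 2 - ⟪d, y⟫ ^ 2) * (1 - ⟪lam, a⟫ ^ 2)) - ⟪d, y⟫ * ⟪lam, a⟫) :
    ConvexOn ℝ Set.univ φ ∧ ∀ t : ℝ, 0 ≤ t → ∀ y, φ (t • y) = t * φ y := by
  set c : ℝ := ⟪lam, a⟫ with hc_def
  have hc : |c| ≤ 1 := by
    have h := abs_real_inner_le_norm lam a
    rw [hlam, ha] at h; simpa using h
  have hcl := (abs_le.mp hc).1
  have hcr := (abs_le.mp hc).2
  have hcsq : c^2 ≤ 1 := by nlinarith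
  have hk1 : ‖d‖^2 ≤ 1 := by nlinarith [norm_nonneg d]
  set t0 : ℝ := if ‖d‖ = 0 then 0 else (1 - Real.sqrt (1 - ‖d‖^2))/‖d‖^2 with ht0_def
  set N : EuclideanSpace ℝ (Fin m) → ℝ := fun y => ‖y - (t0 * ⟪d, y⟫) • d‖ with hN_def
  have hNnn : ∀ y, 0 ≤ N y := fun y => norm_nonneg _
  -- key quadratic identity
  have hF : ∀ y, (N y)^2 = ‖y‖^2 - ⟪d, y⟫^2 := by
    intro y
    by_cases h0 : ‖d‖ = 0
    · have hd0 : d = 0 := norm_eq_zero.mp h0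
      simp [hN_def, hd0]
    · have ht : 2*t0 - t0^2*‖d‖^2 = 1 := by
        have hW2 : (Real.sqrt (1 - ‖d‖^2))^2 = 1 - ‖d‖^2 :=
          Real.sq_sqrt (by linarith)
        rw [ht0_def, if_neg h0]
        have hk : ‖d‖^2 ≠ 0 := pow_ne_zero 2 h0
        field_simp
        linear_combination (-1) * hW2
      have hexp : (N y)^2 = ‖y‖^2 - 2*((t0 * ⟪d,y⟫) * ⟪d,y⟫) + (t0 * ⟪d,y⟫)^2*‖d‖^2 := by
        rw [hN_def]
        simp only
        rw [norm_sub_sq_real, real_inner_smul_right, real_inner_comm y d, norm_smul]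
        ring_nf
        rw [Real.norm_eq_abs, sq_abs]
        ring
      rw [hexp]
      nlinarith [ht, sq_nonneg (⟪d,y⟫)]
  -- linearity of the map
  have hI : ∀ (p q : ℝ) (x y : EuclideanSpace ℝ (Fin m)),
      ⟪d, p•x + q•y⟫ = p*⟪d,x⟫ + q*⟪d,y⟫ := by
    intro p q x y
    rw [inner_add_right, real_inner_smul_right, real_inner_smul_right]
  have hlinF : ∀ (p q : ℝ) (x y : EuclideanSpace ℝ (Fin m)),
      (p•x + q•y) - (t0 * ⟪d, p•x + q•y⟫) • d
        = p • (x - (t0*⟪d,x⟫)•d) + q • (y - (t0*⟪d,y⟫)•d) := by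
    intro p q x y
    rw [hI p q x y]
    module
  -- upper bound
  have hupper : ∀ (y : EuclideanSpace ℝ (Fin m)) (u : ℝ), c ≤ u → u ≤ 1 →
      Real.sqrt (1-u^2) * N y - u * ⟪d,y⟫ ≤ φ y := by
    intro y u hcu hu1
    have hu2 : u^2 ≤ 1 := by nlinarith
    have hv : 0 ≤ Real.sqrt (1-u^2) := Real.sqrt_nonneg _
    have hv2 : (Real.sqrt (1-u^2))^2 = 1-u^2 := Real.sq_sqrt (by linarith)
    have hA2 := hF y
    have hA := hNnn y
    rw [hφ y]
    split_ifs with h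
    · have h1 : (Real.sqrt (1-u^2) * N y - u * ⟪d,y⟫)^2 + (N y * u + ⟪d,y⟫ * Real.sqrt (1-u^2))^2 = ‖y‖^2 := by
        linear_combination ((N y)^2 + ⟪d,y⟫^2) * hv2 + hA2
      nlinarith [h1, sq_nonneg (N y * u + ⟪d,y⟫ * Real.sqrt (1-u^2)), norm_nonneg y]
    · push_neg at h
      have hw : 0 ≤ Real.sqrt (1-c^2) := Real.sqrt_nonneg _
      have hw2 : (Real.sqrt (1-c^2))^2 = 1-c^2 := Real.sq_sqrt (by linarith)
      have hsq : Real.sqrt ((‖y‖^2 - ⟪d,y⟫^2) * (1-c^2)) = N y * Real.sqrt (1-c^2) := by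
        rw [show (‖y‖^2 - ⟪d,y⟫^2) * (1-c^2) = (N y * Real.sqrt (1-c^2))^2 by
          rw [mul_pow, hA2, hw2]]
        exact Real.sqrt_sq (by positivity)
      rw [hsq]
      have := aux2 (⟪d,y⟫) c u (‖y‖) (Real.sqrt (1-u^2)) (Real.sqrt (1-c^2)) (N y)
        (norm_nonneg y) hcu hu1 hv hv2 hw hw2 hA hA2 h
      linarith
  -- attainment
  have hattain : ∀ y : EuclideanSpace ℝ (Fin m), ∃ u : ℝ, c ≤ u ∧ u ≤ 1 ∧
      φ y = Real.sqrt (1-u^2) * N y - u * ⟪d,y⟫ := by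
    intro y
    have hA2 := hF y
    have hA := hNnn y
    have hs2 : ⟪d,y⟫^2 ≤ ‖y‖^2 := by nlinarith
    rw [hφ y]
    split_ifs with h
    · rcases eq_or_lt_of_le (norm_nonneg y) with hr0 | hr0
      · refine ⟨c, le_refl c, hcr, ?_⟩
        have hs0 : ⟪d,y⟫ = 0 := by nlinarith
        have hA0 : N y = 0 := by nlinarith
        rw [hs0, hA0]
        simp [← hr0]
      · refine ⟨-⟪d,y⟫/‖y‖, ?_, ?_, ?_⟩
        · rw [le_div_iff₀ hr0]; linarith
        · rw [div_le_one hr0]; nlinarith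
        · exact (aux3 ‖y‖ ⟪d,y⟫ (N y) hr0 hA hA2).symm
    · push_neg at h
      refine ⟨c, le_refl c, hcr, ?_⟩
      have hw2 : (Real.sqrt (1-c^2))^2 = 1-c^2 := Real.sq_sqrt (by linarith)
      have hsq : Real.sqrt ((‖y‖^2 - ⟪d,y⟫^2) * (1-c^2)) = N y * Real.sqrt (1-c^2) := by
        rw [show (‖y‖^2 - ⟪d,y⟫^2) * (1-c^2) = (N y * Real.sqrt (1-c^2))^2 by
          rw [mul_pow, hA2, hw2]]
        exact Real.sqrt_sq (by positivity)
      rw [hsq]; ring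
  constructor
  · refine ⟨convex_univ, ?_⟩
    intro x _ y _ p q hp hq hpq
    obtain ⟨u, hu1, hu2, he⟩ := hattain (p•x + q•y)
    rw [he, hI p q x y]
    have hv : 0 ≤ Real.sqrt (1-u^2) := Real.sqrt_nonneg _
    have hN : N (p•x + q•y) ≤ p * N x + q * N y := by
      rw [hN_def]
      simp only
      rw [hlinF p q x y]
      refine (norm_add_le _ _).trans ?_
      rw [norm_smul, norm_smul, Real.norm_eq_abs, Real.norm_eq_abs,
        abs_of_nonneg hp, abs_of_nonneg hq]
    have step1 := mul_le_mul_of_nonneg_left hN hv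
    have b1 := hupper x u hu1 hu2
    have b2 := hupper y u hu1 hu2
    have step2 := mul_le_mul_of_nonneg_left b1 hp
    have step3 := mul_le_mul_of_nonneg_left b2 hq
    simp only [smul_eq_mul]
    nlinarith [step1, step2, step3]
  · intro t ht y
    rcases eq_or_lt_of_le ht with h0 | hpos
    · rw [← h0, zero_smul, hφ 0]
      simp
    · rw [hφ (t•y), hφ y]
      have hn : ‖t • y‖ = t * ‖y‖ := by
        rw [norm_smul, Real.norm_eq_abs, abs_of_nonneg ht]
      have hi : ⟪d, t•y⟫ = t * ⟪d,y⟫ := real_inner_smul_right d y t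
      rw [hn, hi]
      by_cases h1 : c * ‖y‖ + ⟪d,y⟫ ≤ 0
      · rw [if_pos h1, if_pos (by nlinarith)]
      · rw [if_neg h1, if_neg (by push_neg at h1 ⊢; nlinarith)]
        rw [show ((t*‖y‖)^2 - (t*⟪d,y⟫)^2) * (1-c^2) = t^2 * ((‖y‖^2 - ⟪d,y⟫^2)*(1-c^2)) by ring,
          Real.sqrt_mul (sq_nonneg t), Real.sqrt_sq ht]
        ring
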